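/- arXiv:math/9811176 — 2 statements merged into one kernel-verified Lean document; each statement's English description precedes it below -/
import Mathlib

section
/- Let N ≥ 2 be an integer, R₀ > 0, and E_{R₀} = {x ∈ ℝ^N : |x| > R₀}. Let Q₀, Q₀ʳ : E_{R₀} → ℝ be functions bounded on each sphere {|x| = r} (r > R₀), with Q₀(x) ≤ 0 for all x, and let h : (R₀,∞) → ℝ satisfy 0 < h(r) ≤ 2/r for all r > R₀. Define b(r) = inf_{|x|=r} [−(Q₀(x) + h(r)^{−1} Q₀ʳ(x))] and p(r) = inf_{|x|=r} [−(2Q₀(x) + r Q₀ʳ(x))]. Let c₀ > 0 and let F : (R₀,∞) → ℝ satisfy F(r)² ≤ c₀ r⁴ h(r)² b(r) for all r > R₀ and F(r) → ∞ as r → ∞. Then r² p(r) → ∞ as r → ∞; consequently, for every c₁ > 0 there exists r₀ > R₀ such that p(r) − c₁ r^{−2} ≥ p(r)/2 for all r ≥ r₀. (Steps (4.21)–(4.22) in the proof of Proposition 4.4.) -/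
open Set Filter

/-- Steps (4.21)–(4.22) in the proof of Proposition 4.4: with
`b r = inf_{‖x‖ = r} (-(Q₀ x + (h r)⁻¹ * Q₀r x))` and
`p r = inf_{‖x‖ = r} (-(2 * Q₀ x + r * Q₀r x))`, if `F r ^ 2 ≤ c₀ * r ^ 4 *
(h r) ^ 2 * b r` for all `r > R₀` and `F r → ∞` as `r → ∞`, then
`r ^ 2 * p r → ∞` as `r → ∞` and, for every `c₁ > 0`, there is `r₀ > R₀` with
`p r - c₁ * r⁻² ≥ p r / 2` for all `r ≥ r₀`. -/
theorem prop_4_4_steps_421_422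
    (N : ℕ) (hN : 2 ≤ N) (R₀ : ℝ) (hR₀ : 0 < R₀)
    (Q₀ Q₀r : EuclideanSpace ℝ (Fin N) → ℝ)
    (hQ₀_bdd : ∀ r : ℝ, R₀ < r → ∃ C : ℝ,
      ∀ x : EuclideanSpace ℝ (Fin N), ‖x‖ = r → |Q₀ x| ≤ C)
    (hQ₀r_bdd : ∀ r : ℝ, R₀ < r → ∃ C : ℝ,
      ∀ x : EuclideanSpace ℝ (Fin N), ‖x‖ = r → |Q₀r x| ≤ C)
    (hQ₀_nonpos : ∀ x : EuclideanSpace ℝ (Fin N), R₀ < ‖x‖ → Q₀ x ≤ 0)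
    (h : ℝ → ℝ)
    (hh : ∀ r : ℝ, R₀ < r → 0 < h r ∧ h r ≤ 2 / r)
    (b p : ℝ → ℝ)
    (hb : ∀ r : ℝ, R₀ < r →
      b r = sInf ((fun x => -(Q₀ x + (h r)⁻¹ * Q₀r x)) ''
        {x : EuclideanSpace ℝ (Fin N) | ‖x‖ = r}))
    (hp : ∀ r : ℝ, R₀ < r →
      p r = sInf ((fun x => -(2 * Q₀ x + r * Q₀r x)) ''
        {x : EuclideanSpace ℝ (Fin N) | ‖x‖ = r}))
    (c₀ : ℝ) (hc₀ : 0 < c₀) (F : ℝ → ℝ)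
    (hF : ∀ r : ℝ, R₀ < r → F r ^ 2 ≤ c₀ * r ^ 4 * (h r) ^ 2 * b r)
    (hFtop : Tendsto F atTop atTop) :
    Tendsto (fun r => r ^ 2 * p r) atTop atTop ∧
      ∀ c₁ : ℝ, 0 < c₁ → ∃ r₀ : ℝ, R₀ < r₀ ∧
        ∀ r : ℝ, r₀ ≤ r → p r / 2 ≤ p r - c₁ * (r ^ 2)⁻¹ := by

  have hNZ : NeZero N := ⟨by omega⟩
  -- main pointwise bound
  have key : ∀ r : ℝ, R₀ < r → F r ^ 2 / (2 * c₀) ≤ r ^ 2 * p r := by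
    intro r hr
    have hr0 : 0 < r := lt_trans hR₀ hr
    obtain ⟨hhp, hhle⟩ := hh r hr
    have hrh : r * h r ≤ 2 := by
      rw [div_eq_mul_inv] at hhle
      calc r * h r ≤ r * (2 * r⁻¹) := by nlinarith
        _ = 2 := by field_simp
    -- sphere nonempty
    set x₀ : EuclideanSpace ℝ (Fin N) := EuclideanSpace.single (0 : Fin N) r with hx₀def
    have hx₀ : ‖x₀‖ = r := by
      rw [hx₀def, EuclideanSpace.norm_single]
      exact abs_of_pos hr0
    -- b lower bound for inf set
    obtain ⟨C₁, hC₁⟩ := hQ₀_bdd r hr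
    obtain ⟨C₂, hC₂⟩ := hQ₀r_bdd r hr
    have hBdd : BddBelow ((fun x => -(Q₀ x + (h r)⁻¹ * Q₀r x)) ''
        {x : EuclideanSpace ℝ (Fin N) | ‖x‖ = r}) := by
      refine ⟨-(C₁ + (h r)⁻¹ * C₂), ?_⟩
      rintro a ⟨x, hx, rfl⟩
      have h1 := hC₁ x hx
      have h2 := hC₂ x hx
      have h1' := abs_le.1 h1
      have h2' := abs_le.1 h2
      have hinv : 0 < (h r)⁻¹ := inv_pos.2 hhp
      have : (h r)⁻¹ * Q₀r x ≤ (h r)⁻¹ * C₂ := by nlinarith [h2'.2]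
      have : -((h r)⁻¹ * C₂) ≤ (h r)⁻¹ * Q₀r x := by nlinarith [h2'.1]
      simp only [neg_add]
      nlinarith [h1'.2, h2'.1, h2'.2]
    -- p r ≥ r * h r * b r
    have hpb : r * h r * b r ≤ p r := by
      rw [hp r hr, hb r hr]
      refine le_csInf ⟨_, x₀, hx₀, rfl⟩ ?_
      rintro a ⟨x, hx, rfl⟩
      have hxr : R₀ < ‖x‖ := by rw [hx]; exact hr
      have hQn := hQ₀_nonpos x hxr
      have h1 : sInf ((fun x => -(Q₀ x + (h r)⁻¹ * Q₀r x)) ''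
          {x : EuclideanSpace ℝ (Fin N) | ‖x‖ = r}) ≤ -(Q₀ x + (h r)⁻¹ * Q₀r x) :=
        csInf_le hBdd ⟨x, hx, rfl⟩
      have hrhpos : 0 < r * h r := mul_pos hr0 hhp
      have hcancel : h r * (h r)⁻¹ = 1 := mul_inv_cancel₀ hhp.ne'
      have h2 : r * h r * -(Q₀ x + (h r)⁻¹ * Q₀r x) ≤ -(2 * Q₀ x + r * Q₀r x) := by
        have : r * h r * ((h r)⁻¹ * Q₀r x) = r * Q₀r x := by
          field_simp
        nlinarith [hQn, hrh]
      calc r * h r * sInf _ ≤ r * h r * -(Q₀ x + (h r)⁻¹ * Q₀r x) := by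
            exact mul_le_mul_of_nonneg_left h1 hrhpos.le
        _ ≤ -(2 * Q₀ x + r * Q₀r x) := h2
    -- b r nonneg
    have hbF := hF r hr
    have hbnn : 0 ≤ b r := by
      by_contra hc
      push_neg at hc
      nlinarith [sq_nonneg (F r), sq_nonneg (r^2 * h r), mul_pos (mul_pos hc₀ (pow_pos hr0 4)) (pow_pos hhp 2)]
    -- finish
    rw [div_le_iff₀ (by positivity)]
    have hint1 : r ^ 2 * (r * h r * b r) ≤ r ^ 2 * p r :=
      mul_le_mul_of_nonneg_left hpb (by positivity)
    have hint2 : c₀ * r ^ 4 * h r ^ 2 * b r ≤ 2 * c₀ * (r ^ 3 * h r * b r) := by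
      have hnn : 0 ≤ c₀ * (r^3 * h r * b r) := by positivity
      nlinarith [mul_le_mul_of_nonneg_right hrh (by positivity : (0:ℝ) ≤ c₀ * (r^2 * h r * b r))]
    nlinarith [hF r hr]
  have hmain : Tendsto (fun r => r ^ 2 * p r) atTop atTop := by
    have hF2 : Tendsto (fun r => F r ^ 2 / (2 * c₀)) atTop atTop := by
      apply Tendsto.atTop_div_const (by positivity)
      have := hFtop.atTop_mul_atTop₀ hFtop
      refine this.congr (fun r => ?_)
      ring
    apply tendsto_atTop_mono' atTop _ hF2
    filter_upwards [eventually_gt_atTop R₀] with r hr using key r hr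
  refine ⟨hmain, fun c₁ hc₁ => ?_⟩
  obtain ⟨a, ha⟩ := (hmain.eventually_ge_atTop (2 * c₁)).exists_forall_of_atTop
  refine ⟨max a (R₀ + 1), lt_of_lt_of_le (by linarith) (le_max_right _ _), fun r hrr => ?_⟩
  have hra : a ≤ r := le_trans (le_max_left _ _) hrr
  have hrR : R₀ + 1 ≤ r := le_trans (le_max_right _ _) hrr
  have hr0 : 0 < r := by linarith
  have hge : 2 * c₁ ≤ r ^ 2 * p r := ha r hra
  have hr2 : (0:ℝ) < r ^ 2 := by positivity
  have hinv : (0:ℝ) < (r ^ 2)⁻¹ := inv_pos.2 hr2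
  have hcan : r ^ 2 * (r ^ 2)⁻¹ = 1 := mul_inv_cancel₀ hr2.ne'
  nlinarith [mul_le_mul_of_nonneg_right hge hinv.le]
end

section
/- Let X be a complex Hilbert space with inner product ⟪·,·⟫ and norm ‖·‖, let r₄ > 0, and let v : ℝ → X be differentiable at every r ≥ r₄ with derivative v'(r). Suppose 2 Re ⟪v'(r), v(r)⟫ ≥ 2 r^{−1} ‖v(r)‖² for all r ≥ r₄, and suppose there is r₃ ≥ r₄ with ‖v(r₃)‖ > 0. Then for all r ≥ r₃ one has ‖v'(r)‖² ≥ r^{−2} ‖v(r)‖² ≥ r₃^{−2} ‖v(r₃)‖² > 0. (This is the essential content (5.18)–(5.20) of Proposition 5.4: the first inequality follows from the hypothesis together with the Cauchy–Schwarz inequality, the second from the monotonicity of r^{−2}‖v(r)‖².) -/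
open Set

/-- The essential content (5.18)–(5.20) of Proposition 5.4: if
`2 Re ⟪v' r, v r⟫ ≥ 2 r⁻¹ ‖v r‖²` for all `r ≥ r₄` and `‖v r₃‖ > 0` for some
`r₃ ≥ r₄`, then for all `r ≥ r₃`,
`‖v' r‖² ≥ r⁻² ‖v r‖² ≥ r₃⁻² ‖v r₃‖² > 0`. -/
theorem prop_5_4_lower_bound
    {X : Type*} [NormedAddCommGroup X] [InnerProductSpace ℂ X]
    (r₄ : ℝ) (hr₄ : 0 < r₄) (v v' : ℝ → X)
    (hdiff : ∀ r : ℝ, r₄ ≤ r → HasDerivAt v (v' r) r)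
    (hineq : ∀ r : ℝ, r₄ ≤ r →
      2 * r⁻¹ * ‖v r‖ ^ 2 ≤ 2 * (inner ℂ (v' r) (v r) : ℂ).re)
    (r₃ : ℝ) (hr₃ : r₄ ≤ r₃) (hv : 0 < ‖v r₃‖) :
    ∀ r : ℝ, r₃ ≤ r →
      (r ^ 2)⁻¹ * ‖v r‖ ^ 2 ≤ ‖v' r‖ ^ 2 ∧
      (r₃ ^ 2)⁻¹ * ‖v r₃‖ ^ 2 ≤ (r ^ 2)⁻¹ * ‖v r‖ ^ 2 ∧
      0 < (r₃ ^ 2)⁻¹ * ‖v r₃‖ ^ 2 := by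
  have hr₃0 : 0 < r₃ := lt_of_lt_of_le hr₄ hr₃
  -- derivative of the squared norm
  have hnorm : ∀ r : ℝ, r₄ ≤ r →
      HasDerivAt (fun t => ‖v t‖ ^ 2) (2 * (inner ℂ (v' r) (v r) : ℂ).re) r := by
    intro r hr
    have h1 : HasDerivAt (fun t => (inner ℂ (v t) (v t) : ℂ))
        ((inner ℂ (v r) (v' r) : ℂ) + (inner ℂ (v' r) (v r) : ℂ)) r :=
      (hdiff r hr).inner ℂ (hdiff r hr)
    have h2 : HasDerivAt (fun t => ((inner ℂ (v t) (v t) : ℂ)).re)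
        (((inner ℂ (v r) (v' r) : ℂ) + (inner ℂ (v' r) (v r) : ℂ)).re) r :=
      (Complex.reCLM.hasFDerivAt.comp_hasDerivAt r h1)
    have e1 : (fun t => ((inner ℂ (v t) (v t) : ℂ)).re) = fun t => ‖v t‖ ^ 2 := by
      funext t
      exact inner_self_eq_norm_sq (𝕜 := ℂ) (v t)
    have e2 : ((inner ℂ (v r) (v' r) : ℂ) + (inner ℂ (v' r) (v r) : ℂ)).re
        = 2 * (inner ℂ (v' r) (v r) : ℂ).re := by
      rw [Complex.add_re, ← inner_conj_symm (v r) (v' r), Complex.conj_re]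
      ring
    rw [← e1, ← e2]
    exact h2
  set g : ℝ → ℝ := fun t => (t ^ 2)⁻¹ * ‖v t‖ ^ 2 with hg_def
  -- derivative of g
  have hg : ∀ r : ℝ, r₄ ≤ r → HasDerivAt g
      ((-(2 * r) / (r ^ 2) ^ 2) * ‖v r‖ ^ 2
        + (r ^ 2)⁻¹ * (2 * (inner ℂ (v' r) (v r) : ℂ).re)) r := by
    intro r hr
    have hr0 : (0:ℝ) < r := lt_of_lt_of_le hr₄ hr
    have hpow : HasDerivAt (fun t : ℝ => t ^ 2) (2 * r) r := by
      simpa using hasDerivAt_pow 2 r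
    have hinv : HasDerivAt (fun t : ℝ => (t ^ 2)⁻¹) (-(2 * r) / (r ^ 2) ^ 2) r :=
      hpow.inv (pow_ne_zero _ (ne_of_gt hr0))
    exact hinv.mul (hnorm r hr)
  -- the derivative of g is nonneg on [r₄, ∞)
  have hg' : ∀ r : ℝ, r₄ ≤ r →
      0 ≤ (-(2 * r) / (r ^ 2) ^ 2) * ‖v r‖ ^ 2
        + (r ^ 2)⁻¹ * (2 * (inner ℂ (v' r) (v r) : ℂ).re) := by
    intro r hr
    have hr0 : (0:ℝ) < r := lt_of_lt_of_le hr₄ hr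
    have h1 := mul_le_mul_of_nonneg_left (hineq r hr)
      (inv_nonneg.2 (sq_nonneg r) : (0:ℝ) ≤ (r ^ 2)⁻¹)
    have h2 : (-(2 * r) / (r ^ 2) ^ 2) * ‖v r‖ ^ 2
        + (r ^ 2)⁻¹ * (2 * r⁻¹ * ‖v r‖ ^ 2) = 0 := by
      field_simp
      ring
    linarith
  -- monotonicity of g on [r₃, ∞)
  have hmono : MonotoneOn g (Ici r₃) := by
    apply monotoneOn_of_deriv_nonneg (convex_Ici r₃)
    · intro x hx
      exact ((hg x (le_trans hr₃ hx)).continuousAt).continuousWithinAt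
    · intro x hx
      rw [interior_Ici] at hx
      exact ((hg x (le_trans hr₃ (le_of_lt hx))).differentiableAt).differentiableWithinAt
    · intro x hx
      rw [interior_Ici] at hx
      have hx' : r₄ ≤ x := le_trans hr₃ (le_of_lt hx)
      rw [(hg x hx').deriv]
      exact hg' x hx'
  have hpos : 0 < (r₃ ^ 2)⁻¹ * ‖v r₃‖ ^ 2 := by positivity
  intro r hr
  have hr0 : (0:ℝ) < r := lt_of_lt_of_le hr₃0 hr
  have hmon : (r₃ ^ 2)⁻¹ * ‖v r₃‖ ^ 2 ≤ (r ^ 2)⁻¹ * ‖v r‖ ^ 2 :=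
    hmono (self_mem_Ici) hr hr
  have hvr : 0 < ‖v r‖ := by
    by_contra h
    push_neg at h
    have : ‖v r‖ = 0 := le_antisymm h (norm_nonneg _)
    rw [this] at hmon
    simp at hmon
    nlinarith
  refine ⟨?_, hmon, hpos⟩
  -- Cauchy–Schwarz
  have hcs : ((inner ℂ (v' r) (v r) : ℂ)).re ≤ ‖v' r‖ * ‖v r‖ :=
    re_inner_le_norm (𝕜 := ℂ) (v' r) (v r)
  have h1 : 2 * r⁻¹ * ‖v r‖ ^ 2 ≤ 2 * (‖v' r‖ * ‖v r‖) := by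
    have := hineq r (le_trans hr₃ hr)
    linarith
  have h2 : r⁻¹ * ‖v r‖ ≤ ‖v' r‖ := by
    have := mul_le_mul_of_nonneg_right h1 (le_of_lt (inv_pos.2 hvr))
    calc r⁻¹ * ‖v r‖ = (2 * r⁻¹ * ‖v r‖ ^ 2) * (2 * ‖v r‖)⁻¹ := by
          field_simp
      _ ≤ (2 * (‖v' r‖ * ‖v r‖)) * (2 * ‖v r‖)⁻¹ := by
          apply mul_le_mul_of_nonneg_right h1
          positivity
      _ = ‖v' r‖ := by field_simp
  calc (r ^ 2)⁻¹ * ‖v r‖ ^ 2 = (r⁻¹ * ‖v r‖) ^ 2 := by ring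
    _ ≤ ‖v' r‖ ^ 2 := by
        apply pow_le_pow_left₀ (by positivity) h2
end
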